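/- Let (u,p) be a Gavrilov flow on an open set U ⊆ ℝⁿ, let φ : ℝ → ℝ be a smooth function, and let Φ : ℝ → ℝ be a smooth function with Φ' = φ². Then the pair (ũ, p̃) defined by ũ(x) = φ(p(x))·u(x) and p̃(x) = Φ(p(x)) is again a Gavrilov flow on U; in particular ∇p̃(x) = φ(p(x))²·∇p(x) for all x ∈ U. -/

import Mathlib

/-- A pair `(u, p)` of smooth functions on an open set `U ⊆ ℝⁿ` is a *Gavrilov flow*
if it satisfies the steady Euler equations (momentum and incompressibility) together with
the orthogonality condition `u · grad p = 0` at every point of `U`. -/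
def IsGavrilovFlow {n : ℕ} (U : Set (Fin n → ℝ)) (u : (Fin n → ℝ) → Fin n → ℝ)
    (p : (Fin n → ℝ) → ℝ) : Prop :=
  IsOpen U ∧ ContDiffOn ℝ (⊤ : ℕ∞) u U ∧ ContDiffOn ℝ (⊤ : ℕ∞) p U ∧
  (∀ x ∈ U, ∀ i, (∑ j, u x j * fderiv ℝ u x (Pi.single j 1) i)
      + fderiv ℝ p x (Pi.single i 1) = 0) ∧
  (∀ x ∈ U, ∑ i, fderiv ℝ u x (Pi.single i 1) i = 0) ∧
  (∀ x ∈ U, ∑ i, u x i * fderiv ℝ p x (Pi.single i 1) = 0)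

/-- if `(u,p)` is a Gavrilov flow on `U`, `φ` is smooth and `Φ' = φ²`,
then `(φ(p)·u, Φ(p))` is again a Gavrilov flow on `U`, and
`grad (Φ ∘ p) = φ(p)² · grad p` on `U`. -/
theorem gavrilov_rescaling {n : ℕ} (U : Set (Fin n → ℝ))
    (u : (Fin n → ℝ) → Fin n → ℝ) (p : (Fin n → ℝ) → ℝ)
    (hG : IsGavrilovFlow U u p)
    (φ Φ : ℝ → ℝ) (hφ : ContDiff ℝ (⊤ : ℕ∞) φ) (hΦ : ContDiff ℝ (⊤ : ℕ∞) Φ)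
    (hΦ' : ∀ s, deriv Φ s = φ s ^ 2) :
    IsGavrilovFlow U (fun x => φ (p x) • u x) (fun x => Φ (p x)) ∧
    ∀ x ∈ U, ∀ i, fderiv ℝ (fun y => Φ (p y)) x (Pi.single i 1)
      = φ (p x) ^ 2 * fderiv ℝ p x (Pi.single i 1) := by
  obtain ⟨hU, hu, hp, hmom, hdiv, horth⟩ := hG
  have hpd : ∀ x ∈ U, DifferentiableAt ℝ p x := fun x hx =>
    (hp.contDiffAt (hU.mem_nhds hx)).differentiableAt (by simp)
  have hud : ∀ x ∈ U, DifferentiableAt ℝ u x := fun x hx =>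
    (hu.contDiffAt (hU.mem_nhds hx)).differentiableAt (by simp)
  -- derivative of Φ ∘ p
  have key : ∀ x ∈ U, ∀ v, fderiv ℝ (fun y => Φ (p y)) x v
      = φ (p x) ^ 2 * fderiv ℝ p x v := by
    intro x hx v
    have hΦd : HasDerivAt Φ (φ (p x) ^ 2) (p x) := by
      have h := ((hΦ.differentiable (by simp)) (p x)).hasDerivAt
      rwa [hΦ' (p x)] at h
    have h2 : HasFDerivAt (fun y => Φ (p y)) ((φ (p x) ^ 2) • fderiv ℝ p x) x :=
      hΦd.comp_hasFDerivAt x (hpd x hx).hasFDerivAt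
    rw [h2.fderiv]
    simp [smul_eq_mul]
  -- derivative of (φ ∘ p) • u
  have key2 : ∀ x ∈ U, ∀ v, ∀ i, fderiv ℝ (fun y => φ (p y) • u y) x v i
      = deriv φ (p x) * fderiv ℝ p x v * u x i + φ (p x) * fderiv ℝ u x v i := by
    intro x hx v i
    have hφd : HasFDerivAt (fun y => φ (p y)) ((deriv φ (p x)) • fderiv ℝ p x) x :=
      ((hφ.differentiable (by simp)) (p x)).hasDerivAt.comp_hasFDerivAt x (hpd x hx).hasFDerivAt
    have hs : HasFDerivAt (fun y => φ (p y) • u y)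
        (φ (p x) • fderiv ℝ u x + ((deriv φ (p x)) • fderiv ℝ p x).smulRight (u x)) x :=
      hφd.smul (hud x hx).hasFDerivAt
    rw [hs.fderiv]
    simp [smul_eq_mul]
    ring
  refine ⟨⟨hU, (hφ.comp_contDiffOn hp).smul hu, hΦ.comp_contDiffOn hp, ?_, ?_, ?_⟩,
    fun x hx i => key x hx _⟩
  · intro x hx i
    have hsum : ∑ j, (φ (p x) • u x) j * fderiv ℝ (fun y => φ (p y) • u y) x (Pi.single j 1) i
        = φ (p x) * deriv φ (p x) * u x i * (∑ j, u x j * fderiv ℝ p x (Pi.single j 1))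
          + φ (p x) ^ 2 * (∑ j, u x j * fderiv ℝ u x (Pi.single j 1) i) := by
      rw [Finset.mul_sum, Finset.mul_sum, ← Finset.sum_add_distrib]
      refine Finset.sum_congr rfl fun j _ => ?_
      rw [key2 x hx (Pi.single j 1) i]
      simp [smul_eq_mul]
      ring
    rw [hsum, key x hx]
    have h1 := hmom x hx i
    have h2 := horth x hx
    linear_combination (φ (p x) * deriv φ (p x) * u x i) * h2 + (φ (p x) ^ 2) * h1
  · intro x hx
    have hsum : ∑ i, fderiv ℝ (fun y => φ (p y) • u y) x (Pi.single i 1) i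
        = deriv φ (p x) * (∑ i, u x i * fderiv ℝ p x (Pi.single i 1))
          + φ (p x) * (∑ i, fderiv ℝ u x (Pi.single i 1) i) := by
      rw [Finset.mul_sum, Finset.mul_sum, ← Finset.sum_add_distrib]
      refine Finset.sum_congr rfl fun i _ => ?_
      rw [key2 x hx (Pi.single i 1) i]
      ring
    rw [hsum, horth x hx, hdiv x hx]
    ring
  · intro x hx
    have hsum : ∑ i, (φ (p x) • u x) i * fderiv ℝ (fun y => Φ (p y)) x (Pi.single i 1)
        = φ (p x) ^ 3 * ∑ i, u x i * fderiv ℝ p x (Pi.single i 1) := by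
      rw [Finset.mul_sum]
      refine Finset.sum_congr rfl fun i _ => ?_
      rw [key x hx]
      simp [smul_eq_mul]
      ring
    rw [hsum, horth x hx, mul_zero]
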